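/- Let A be a commutative ring. Then A is a weakly Arf ring if and only if for every I ∈ Λ(A) the ring A^I is a weakly Arf ring, where A^I = ⋃_{n ≥ 0} (Iⁿ : Iⁿ) and Iⁿ : Iⁿ = {q ∈ Q(A) : q·Iⁿ ⊆ Iⁿ} is the endomorphism algebra of Iⁿ taken inside Q(A). -/

import Mathlib

open scoped TensorProduct

/-- `A` is a *weakly Arf ring*: whenever `x, y, z ∈ A` with `x` a non-zerodivisor on `A`
and the fractions `y/x` and `z/x` in the total ring of fractions `Q(A)` are integral
over `A`, then `y * z ∈ x A`. -/
def IsWeaklyArfRing (A : Type*) [CommRing A] : Prop :=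
  ∀ (x y z : A) (hx : x ∈ nonZeroDivisors A),
    IsIntegral A (IsLocalization.mk' (FractionRing A) y
      (⟨x, hx⟩ : nonZeroDivisors A)) →
    IsIntegral A (IsLocalization.mk' (FractionRing A) z
      (⟨x, hx⟩ : nonZeroDivisors A)) →
    y * z ∈ Ideal.span {x}

/-- `a` belongs to the integral closure of the ideal `I`: it satisfies an equation
`a ^ n + c 1 * a ^ (n - 1) + ⋯ + c n = 0` with `c i ∈ I ^ i`, for some `n ≥ 1`. -/
def MemIdealIntegralClosure {A : Type*} [CommRing A] (I : Ideal A) (a : A) : Prop :=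
  ∃ n : ℕ, 0 < n ∧ ∃ c : ℕ → A,
    (∀ i ∈ Finset.Icc 1 n, c i ∈ I ^ i) ∧
    a ^ n + ∑ i ∈ Finset.Icc 1 n, c i * a ^ (n - i) = 0

/-- The integral closure `Ī` of an ideal `I` of `A`, as a subset of `A`. -/
def idealIntegralClosure {A : Type*} [CommRing A] (I : Ideal A) : Set A :=
  {a | MemIdealIntegralClosure I a}

/-- An ideal `I` is integrally closed if `Ī = I`. -/
def Ideal.IsIntegrallyClosedIdeal {A : Type*} [CommRing A] (I : Ideal A) : Prop :=
  idealIntegralClosure I = (I : Set A)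

/-- `Λ(A)`: the set of ideals of `A` of the form `\overline{(x)}` (the integral closure
of the principal ideal `x A`) with `x` a non-zerodivisor on `A`. -/
def LambdaSet (A : Type*) [CommRing A] : Set (Ideal A) :=
  {J | ∃ x ∈ nonZeroDivisors A, (J : Set A) = idealIntegralClosure (Ideal.span {x})}

/-- The set `A^I = ⋃_{n ≥ 0} (Iⁿ : Iⁿ)` inside `Q(A)`, where
`Iⁿ : Iⁿ = {q ∈ Q(A) : q · Iⁿ ⊆ Iⁿ}` and `Iⁿ` is viewed in `Q(A)`. -/
def algebraAtIdealSet (A : Type*) [CommRing A] (I : Ideal A) : Set (FractionRing A) :=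
  {q | ∃ n : ℕ, ∀ m ∈ Submodule.map (Algebra.linearMap A (FractionRing A)) (I ^ n),
    q * m ∈ Submodule.map (Algebra.linearMap A (FractionRing A)) (I ^ n)}




section L1
variable {A : Type*} [CommRing A] {x : A} (hx : x ∈ nonZeroDivisors A)

local notation "Q" => FractionRing A
local notation "alg" => algebraMap A (FractionRing A)

theorem unit_alg (y : A) (hy : y ∈ nonZeroDivisors A) : IsUnit (alg y) :=
  IsLocalization.map_units Q (⟨y, hy⟩ : nonZeroDivisors A)

include hx in
theorem mem_closure_of_integral {a : A}
    (h : IsIntegral A (IsLocalization.mk' Q a (⟨x, hx⟩ : nonZeroDivisors A))) :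
    a ∈ idealIntegralClosure (Ideal.span {x}) := by
  rcases subsingleton_or_nontrivial A with hA | hA
  · exact ⟨1, one_pos, fun _ => 0, fun i _ => zero_mem _, Subsingleton.elim _ _⟩
  obtain ⟨p₀, hm₀, he₀⟩ := h
  set q := IsLocalization.mk' Q a (⟨x, hx⟩ : nonZeroDivisors A) with hq
  have hqx : q * alg x = alg a := IsLocalization.mk'_spec Q a ⟨x, hx⟩
  -- replace p by p * X to ensure degree ≥ 1
  set p := p₀ * Polynomial.X with hp
  have hm : p.Monic := hm₀.mul (Polynomial.monic_X)
  have he : Polynomial.eval₂ alg q p = 0 := by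
    simp only [hp, Polynomial.eval₂_mul, Polynomial.eval₂_X]
    rw [he₀, zero_mul]
  set n := p.natDegree with hn
  have hn1 : 1 ≤ n := by
    have : p₀.natDegree + 1 = n := by
      rw [hn, hp, Polynomial.natDegree_mul_X]
      exact hm₀.ne_zero
    omega
  refine ⟨n, hn1, fun i => x ^ i * p.coeff (n - i), fun i _ => ?_, ?_⟩
  · rw [Ideal.span_singleton_pow]
    exact Ideal.mem_span_singleton'.mpr ⟨p.coeff (n - i), mul_comm _ _⟩
  · apply IsFractionRing.injective A Q
    rw [map_zero, map_add, map_pow, map_sum]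
    have key : ∀ j ≤ n, (alg x) ^ n * q ^ j = (alg x) ^ (n - j) * (alg a) ^ j := by
      intro j hj
      have h2 : (alg x)^n = (alg x)^(n-j) * (alg x)^j := by
        rw [← pow_add, Nat.sub_add_cancel hj]
      rw [h2, mul_assoc, ← mul_pow, mul_comm (alg x) q, hqx]
    have he2 : (alg x) ^ n * Polynomial.eval₂ alg q p = 0 := by rw [he, mul_zero]
    rw [Polynomial.eval₂_eq_sum_range, ← hn, Finset.mul_sum] at he2
    rw [Finset.sum_range_succ] at he2
    have hcn : p.coeff n = 1 := hm
    rw [hcn, map_one, one_mul, key n le_rfl, Nat.sub_self, pow_zero, one_mul] at he2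
    -- reindex: sum over range n ↔ sum over Icc 1 n via i ↦ n - i
    have hre : ∑ i ∈ Finset.Icc 1 n, alg (x ^ i * p.coeff (n - i) * a ^ (n - i))
        = ∑ j ∈ Finset.range n, (alg x) ^ n * (alg (p.coeff j) * q ^ j) := by
      refine Finset.sum_nbij' (fun i => n - i) (fun j => n - j) ?_ ?_ ?_ ?_ ?_
      · intro i hi; simp only [Finset.mem_Icc] at hi; simp only [Finset.mem_range]; omega
      · intro j hj; simp only [Finset.mem_range] at hj; simp only [Finset.mem_Icc]; omega
      · intro i hi; simp only [Finset.mem_Icc] at hi; show n - (n - i) = i; omega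
      · intro j hj; simp only [Finset.mem_range] at hj; show n - (n - j) = j; omega
      · intro i hi; simp only [Finset.mem_Icc] at hi
        have h1 : n - (n - i) = i := by omega
        show alg (x ^ i * p.coeff (n - i) * a ^ (n - i))
          = (alg x) ^ n * (alg (p.coeff (n - i)) * q ^ (n - i))
        rw [mul_comm (alg (p.coeff (n - i))) (q ^ (n - i)), ← mul_assoc,
          key (n - i) (by omega), h1, map_mul, map_mul, map_pow, map_pow]
        ring
    rw [hre]
    -- assemble
    calc alg a ^ n + ∑ j ∈ Finset.range n, (alg x) ^ n * (alg (p.coeff j) * q ^ j)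
        = (∑ j ∈ Finset.range n, (alg x) ^ n * (alg (p.coeff j) * q ^ j)) + alg a ^ n := by ring
      _ = 0 := he2

end L1

section L1a
variable {A : Type*} [CommRing A] {x : A} (hx : x ∈ nonZeroDivisors A)
local notation "Q" => FractionRing A
local notation "alg" => algebraMap A (FractionRing A)

include hx in
theorem integral_of_mem_closure {a : A}
    (h : a ∈ idealIntegralClosure (Ideal.span {x})) :
    IsIntegral A (IsLocalization.mk' Q a (⟨x, hx⟩ : nonZeroDivisors A)) := by
  obtain ⟨n, hn1, c, hc, he⟩ := h
  have hd : ∀ i, ∃ d : A, i ∈ Finset.Icc 1 n → c i = x ^ i * d := by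
    intro i
    by_cases hi : i ∈ Finset.Icc 1 n
    · have hmem : c i ∈ Ideal.span {x ^ i} := by
        rw [← Ideal.span_singleton_pow]; exact hc i hi
      obtain ⟨d, hd⟩ := Ideal.mem_span_singleton'.mp hmem
      exact ⟨d, fun _ => by rw [← hd, mul_comm]⟩
    · exact ⟨0, fun h' => absurd h' hi⟩
  choose d hd using hd
  set q := IsLocalization.mk' Q a (⟨x, hx⟩ : nonZeroDivisors A) with hq
  have hqx : q * alg x = alg a := IsLocalization.mk'_spec Q a ⟨x, hx⟩
  set p : Polynomial A :=
    Polynomial.X ^ n + ∑ i ∈ Finset.Icc 1 n, Polynomial.C (d i) * Polynomial.X ^ (n - i) with hp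
  refine ⟨p, ?_, ?_⟩
  · obtain ⟨m, hm⟩ : ∃ m, n = m + 1 := ⟨n - 1, by omega⟩
    rw [hp, hm]
    apply Polynomial.monic_X_pow_add
    apply lt_of_le_of_lt (Polynomial.degree_sum_le _ _)
    rw [Finset.sup_lt_iff (by exact_mod_cast WithBot.bot_lt_coe (m+1))]
    intro i hi
    simp only [Finset.mem_Icc] at hi
    apply lt_of_le_of_lt (Polynomial.degree_C_mul_X_pow_le _ _)
    exact_mod_cast Nat.sub_lt_of_pos_le (by omega) (by omega)
  · have hu : IsUnit ((alg x) ^ n) := (unit_alg x hx).pow n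
    apply hu.mul_left_cancel
    rw [mul_zero]
    have key : ∀ j ≤ n, (alg x) ^ n * q ^ j = (alg x) ^ (n - j) * (alg a) ^ j := by
      intro j hj
      have h2 : (alg x)^n = (alg x)^(n-j) * (alg x)^j := by
        rw [← pow_add, Nat.sub_add_cancel hj]
      rw [h2, mul_assoc, ← mul_pow, mul_comm (alg x) q, hqx]
    rw [hp]
    simp only [Polynomial.eval₂_add, Polynomial.eval₂_pow, Polynomial.eval₂_X,
      Polynomial.eval₂_finset_sum, Polynomial.eval₂_mul, Polynomial.eval₂_C]
    rw [mul_add, key n le_rfl, Nat.sub_self, pow_zero, one_mul, Finset.mul_sum]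
    have : ∀ i ∈ Finset.Icc 1 n,
        (alg x) ^ n * (alg (d i) * q ^ (n - i)) = alg (c i * a ^ (n - i)) := by
      intro i hi
      simp only [Finset.mem_Icc] at hi
      rw [mul_comm (alg (d i)) (q ^ (n - i)), ← mul_assoc, key (n - i) (by omega)]
      have h3 : n - (n - i) = i := by omega
      rw [h3, hd i (Finset.mem_Icc.mpr hi), map_mul, map_mul, map_pow, map_pow]
      ring
    rw [Finset.sum_congr rfl this, ← map_pow, ← map_sum, ← map_add, he, map_zero]

theorem mem_closure_iff_integral {a : A} :
    a ∈ idealIntegralClosure (Ideal.span {x}) ↔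
      IsIntegral A (IsLocalization.mk' Q a (⟨x, hx⟩ : nonZeroDivisors A)) :=
  ⟨integral_of_mem_closure hx, mem_closure_of_integral hx⟩

end L1a


section Sq
variable {A : Type*} [CommRing A] {x : A} (hx : x ∈ nonZeroDivisors A)
local notation "Q" => FractionRing A
local notation "alg" => algebraMap A (FractionRing A)

include hx in
theorem closure_mul (hA : IsWeaklyArfRing A) {u v : A}
    (hu : u ∈ idealIntegralClosure (Ideal.span {x}))
    (hv : v ∈ idealIntegralClosure (Ideal.span {x})) :
    ∃ w ∈ idealIntegralClosure (Ideal.span {x}), u * v = x * w := by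
  have hui := integral_of_mem_closure hx hu
  have hvi := integral_of_mem_closure hx hv
  obtain ⟨w, hw⟩ := Ideal.mem_span_singleton'.mp (hA x u v hx hui hvi)
  refine ⟨w, ?_, by rw [← hw, mul_comm]⟩
  apply mem_closure_of_integral hx
  have h1 : IsLocalization.mk' Q w (⟨x, hx⟩ : nonZeroDivisors A)
      = IsLocalization.mk' Q u ⟨x, hx⟩ * IsLocalization.mk' Q v ⟨x, hx⟩ := by
    rw [← IsLocalization.mk'_mul]
    apply IsLocalization.mk'_eq_of_eq
    simp only [Submonoid.coe_mul]
    calc (x : A) * (u * v) = x * (w * x) := by rw [hw]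
    _ = x * x * w := by ring
  rw [h1]
  exact hui.mul hvi

theorem x_mem_closure : x ∈ idealIntegralClosure (Ideal.span {x}) := by
  refine ⟨1, one_pos, fun _ => -x, fun i hi => ?_, ?_⟩
  · simp only [Finset.mem_Icc] at hi
    have : i = 1 := by omega
    subst this
    rw [pow_one]
    exact neg_mem (Ideal.mem_span_singleton_self x)
  · simp

end Sq


section Repr
variable {A : Type*} [CommRing A] {x : A} (hx : x ∈ nonZeroDivisors A)
  {J : Ideal A} (hJ : (J : Set A) = idealIntegralClosure (Ideal.span {x}))
local notation "Q" => FractionRing A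
local notation "alg" => algebraMap A (FractionRing A)

include hx in
theorem mul_x_mem_closure (c : A) : c * x ∈ idealIntegralClosure (Ideal.span {x}) := by
  apply mem_closure_of_integral hx
  have h : alg c = IsLocalization.mk' Q (c * x) (⟨x, hx⟩ : nonZeroDivisors A) :=
    IsLocalization.eq_mk'_of_mul_eq rfl
  rw [← h]
  exact isIntegral_algebraMap

include hJ in
theorem memJ_iff {a : A} : a ∈ J ↔ a ∈ idealIntegralClosure (Ideal.span {x}) := by
  rw [← SetLike.mem_coe, hJ]

include hx hJ in
theorem pow_rep (hA : IsWeaklyArfRing A) :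
    ∀ n : ℕ, ∀ a ∈ J ^ (n + 1), ∃ u ∈ J, a = x ^ n * u := by
  intro n
  induction n with
  | zero => intro a ha; exact ⟨a, by rwa [pow_one] at ha, by rw [pow_zero, one_mul]⟩
  | succ m ih =>
    intro a ha
    rw [pow_succ] at ha
    refine Submodule.mul_induction_on ha ?_ ?_
    · intro b hb v hv
      obtain ⟨u, huJ, hu⟩ := ih b hb
      have hu' := (memJ_iff hJ).mp huJ
      have hv' := (memJ_iff hJ).mp hv
      obtain ⟨w, hwc, hw⟩ := closure_mul hx hA hu' hv'
      refine ⟨w, (memJ_iff hJ).mpr hwc, ?_⟩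
      rw [hu, mul_assoc, hw, pow_succ]
      ring
    · intro b c hb hc
      obtain ⟨u, huJ, hu⟩ := hb
      obtain ⟨v, hvJ, hv⟩ := hc
      exact ⟨u + v, J.add_mem huJ hvJ, by rw [hu, hv, mul_add]⟩

include hJ in
theorem repr_of_mem_set (hA : IsWeaklyArfRing A) {q : Q}
    (hq : q ∈ algebraAtIdealSet A J) :
    ∃ u ∈ J, q = IsLocalization.mk' Q u (⟨x, hx⟩ : nonZeroDivisors A) := by
  obtain ⟨n, hn⟩ := hq
  cases n with
  | zero =>
    have h1 : (alg (1 : A)) ∈ Submodule.map (Algebra.linearMap A Q) (J ^ 0) := by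
      refine Submodule.mem_map_of_mem ?_
      rw [pow_zero, Ideal.one_eq_top]; trivial
    obtain ⟨a, _, ha⟩ := hn _ h1
    refine ⟨a * x, (memJ_iff hJ).mpr (mul_x_mem_closure hx a), ?_⟩
    have h : alg a = IsLocalization.mk' Q (a * x) (⟨x, hx⟩ : nonZeroDivisors A) :=
      IsLocalization.eq_mk'_of_mul_eq rfl
    rw [← h]
    simp only [Algebra.linearMap_apply, map_one, mul_one] at ha
    exact ha.symm
  | succ m =>
    have hxJ : x ∈ J := (memJ_iff hJ).mpr x_mem_closure
    have h1 : (alg (x ^ (m + 1))) ∈ Submodule.map (Algebra.linearMap A Q) (J ^ (m + 1)) := by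
      exact Submodule.mem_map_of_mem (Ideal.pow_mem_pow hxJ _)
    obtain ⟨a, haJ, ha⟩ := hn _ h1
    obtain ⟨u, huJ, hu⟩ := pow_rep hx hJ hA m a haJ
    refine ⟨u, huJ, ?_⟩
    rw [IsLocalization.eq_mk'_iff_mul_eq]
    simp only [Algebra.linearMap_apply] at ha
    have hux : IsUnit ((alg x) ^ m) := (unit_alg x hx).pow m
    apply hux.mul_left_cancel
    calc (alg x) ^ m * (q * alg x) = q * alg (x ^ (m + 1)) := by
          rw [map_pow, pow_succ]; ring
    _ = alg a := ha.symm
    _ = (alg x) ^ m * alg u := by rw [hu, map_mul, map_pow]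

include hx hJ in
theorem mem_set_of_mem (hA : IsWeaklyArfRing A) {u : A} (huJ : u ∈ J) :
    IsLocalization.mk' Q u (⟨x, hx⟩ : nonZeroDivisors A) ∈ algebraAtIdealSet A J := by
  refine ⟨1, fun m hm => ?_⟩
  rw [pow_one] at hm ⊢
  obtain ⟨v, hvJ, hv⟩ := hm
  have hu' := (memJ_iff hJ).mp huJ
  have hv' := (memJ_iff hJ).mp hvJ
  obtain ⟨w, hwc, hw⟩ := closure_mul hx hA hu' hv'
  refine ⟨w, (memJ_iff hJ).mpr hwc, ?_⟩
  simp only [Algebra.linearMap_apply] at hv ⊢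
  rw [← hv]
  have : IsLocalization.mk' Q u (⟨x, hx⟩ : nonZeroDivisors A) * alg v
      = IsLocalization.mk' Q (u * v) (⟨x, hx⟩ : nonZeroDivisors A) := by
    rw [← IsLocalization.mk'_one (M := nonZeroDivisors A) Q v, ← IsLocalization.mk'_mul]
    congr 1
    rw [mul_one]
  have h2 : alg w = IsLocalization.mk' Q (x * w) (⟨x, hx⟩ : nonZeroDivisors A) :=
    IsLocalization.eq_mk'_of_mul_eq (by ring)
  rw [this, hw, ← h2]

end Repr

section Congr
variable {A B : Type*} [CommRing A] [CommRing B]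

theorem nzd_symm (e : A ≃+* B) {x : B} (hx : x ∈ nonZeroDivisors B) :
    e.symm x ∈ nonZeroDivisors A := by
  rw [mem_nonZeroDivisors_iff_right]
  intro a ha
  have h1 : e a * x = 0 := by
    have := congrArg e ha
    rwa [map_mul, RingEquiv.apply_symm_apply, map_zero] at this
  have h2 : e a = 0 := mem_nonZeroDivisors_iff_right.mp hx _ h1
  have := congrArg e.symm h2
  rwa [RingEquiv.symm_apply_apply, map_zero] at this

theorem isWeaklyArfRing_congr (e : A ≃+* B) (hA : IsWeaklyArfRing A) :
    IsWeaklyArfRing B := by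
  intro x y z hx hy hz
  have hx' : e.symm x ∈ nonZeroDivisors A := nzd_symm e hx
  set g : B →+* FractionRing A := (algebraMap A (FractionRing A)).comp e.symm.toRingHom with hg
  have hgu : ∀ w : nonZeroDivisors B, IsUnit (g w) := fun w =>
    unit_alg _ (nzd_symm e w.2)
  set χ : FractionRing B →+* FractionRing A := IsLocalization.lift hgu with hχ
  have hχc : χ.comp (algebraMap B (FractionRing B)) = g := IsLocalization.lift_comp hgu
  have hmk : ∀ (y : B), χ (IsLocalization.mk' (FractionRing B) y (⟨x, hx⟩ : nonZeroDivisors B))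
      = IsLocalization.mk' (FractionRing A) (e.symm y) (⟨e.symm x, hx'⟩ : nonZeroDivisors A) := by
    intro y
    rw [hχ, IsLocalization.lift_mk'_spec]
    show g y = g x * _
    rw [hg]
    simp only [RingHom.comp_apply, RingEquiv.coe_toRingHom]
    exact (IsLocalization.mk'_spec' (FractionRing A) (e.symm y)
      (⟨e.symm x, hx'⟩ : nonZeroDivisors A)).symm
  have hint : ∀ (y : B),
      IsIntegral B (IsLocalization.mk' (FractionRing B) y (⟨x, hx⟩ : nonZeroDivisors B)) →
      IsIntegral A (IsLocalization.mk' (FractionRing A) (e.symm y)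
        (⟨e.symm x, hx'⟩ : nonZeroDivisors A)) := by
    intro y ⟨p, pm, pe⟩
    refine ⟨p.map e.symm.toRingHom, pm.map _, ?_⟩
    rw [← hmk, Polynomial.eval₂_map, ← hg, ← hχc]
    rw [← Polynomial.hom_eval₂, pe, map_zero]
  have := hA (e.symm x) (e.symm y) (e.symm z) hx' (hint y hy) (hint z hz)
  obtain ⟨c, hc⟩ := Ideal.mem_span_singleton'.mp this
  refine Ideal.mem_span_singleton'.mpr ⟨e c, ?_⟩
  have := congrArg e hc
  rwa [map_mul, map_mul, RingEquiv.apply_symm_apply, RingEquiv.apply_symm_apply,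
    RingEquiv.apply_symm_apply] at this

end Congr

section Fwd
variable {A : Type*} [CommRing A] {x : A} (hx : x ∈ nonZeroDivisors A)
  {J : Ideal A} (hJ : (J : Set A) = idealIntegralClosure (Ideal.span {x}))
  {B : Subalgebra A (FractionRing A)}
  (hB : (B : Set (FractionRing A)) = algebraAtIdealSet A J)
local notation "Q" => FractionRing A
local notation "alg" => algebraMap A (FractionRing A)

include hx hJ hB in
theorem memB_repr (hA : IsWeaklyArfRing A) (q : ↥B) :
    ∃ u ∈ J, q.1 = IsLocalization.mk' Q u (⟨x, hx⟩ : nonZeroDivisors A) := by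
  have hq : q.1 ∈ algebraAtIdealSet A J := by
    have : q.1 ∈ (B : Set Q) := q.2
    rwa [hB] at this
  exact repr_of_mem_set hx hJ hA hq

include hx hJ hB in
theorem nzdB (hA : IsWeaklyArfRing A) (w : ↥B) (hw : w ∈ nonZeroDivisors ↥B) :
    ∃ d : A, d ∈ nonZeroDivisors A ∧ d ∈ J ∧
      w.1 = IsLocalization.mk' Q d (⟨x, hx⟩ : nonZeroDivisors A) := by
  obtain ⟨u, huJ, hu⟩ := memB_repr hx hJ hB hA w
  refine ⟨u, ?_, huJ, hu⟩
  rw [mem_nonZeroDivisors_iff_right]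
  intro a ha
  have h0 : (⟨alg a, B.algebraMap_mem a⟩ : ↥B) * w = 0 := by
    apply Subtype.ext
    show alg a * w.1 = 0
    rw [hu]
    have h1 : alg a * IsLocalization.mk' Q u (⟨x, hx⟩ : nonZeroDivisors A)
        = IsLocalization.mk' Q (a * u) (⟨x, hx⟩ : nonZeroDivisors A) := by
      rw [← IsLocalization.mk'_one (M := nonZeroDivisors A) Q a, ← IsLocalization.mk'_mul]
      congr 1
      rw [one_mul]
    rw [h1, ha, IsLocalization.mk'_zero]
  have h2 := mem_nonZeroDivisors_iff_right.mp hw _ h0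
  have h3 : alg a = 0 := congrArg Subtype.val h2
  exact IsFractionRing.injective A Q (by rw [h3, map_zero])

include hx hJ hB in
set_option maxHeartbeats 1000000 in
theorem unitB (hA : IsWeaklyArfRing A) (w : ↥B) (hw : w ∈ nonZeroDivisors ↥B) :
    IsUnit (algebraMap ↥B Q w) := by
  obtain ⟨d, hd, _, hwd⟩ := nzdB hx hJ hB hA w hw
  show IsUnit w.1
  rw [hwd]
  apply IsUnit.of_mul_eq_one (M := Q) (IsLocalization.mk' Q x (⟨d, hd⟩ : nonZeroDivisors A))
  rw [← IsLocalization.mk'_mul]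
  show IsLocalization.mk' Q (d * x) ((⟨x, hx⟩ : nonZeroDivisors A) * ⟨d, hd⟩) = 1
  rw [show d * x = (((⟨x, hx⟩ : nonZeroDivisors A) * ⟨d, hd⟩ : nonZeroDivisors A) : A)
    from mul_comm d x]
  exact IsLocalization.mk'_self'' _

include hx hJ hB in
theorem intB (hA : IsWeaklyArfRing A) : Algebra.IsIntegral A ↥B := by
  refine ⟨fun q => ?_⟩
  apply (isIntegral_algHom_iff B.val Subtype.val_injective).mp
  obtain ⟨u, huJ, hu⟩ := memB_repr hx hJ hB hA q
  show IsIntegral A q.1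
  rw [hu]
  exact integral_of_mem_closure hx ((memJ_iff hJ).mp huJ)

include hx hJ hB in
theorem fwd_aux (hA : IsWeaklyArfRing A) : IsWeaklyArfRing ↥B := by
  intro b f g hb hf hg
  haveI := intB hx hJ hB hA
  have hgu : ∀ w : nonZeroDivisors ↥B, IsUnit (algebraMap ↥B Q w) :=
    fun w => unitB hx hJ hB hA w w.2
  set χ : FractionRing ↥B →+* Q := IsLocalization.lift hgu with hχ
  have hχc : χ.comp (algebraMap ↥B (FractionRing ↥B)) = algebraMap ↥B Q :=
    IsLocalization.lift_comp hgu
  -- transfer integrality along χ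
  have tIntegral : ∀ (f : ↥B) (q : FractionRing ↥B), IsIntegral ↥B q → IsIntegral A (χ q) := by
    rintro f q ⟨p, pm, pe⟩
    have h1 : IsIntegral ↥B (χ q) := by
      refine ⟨p, pm, ?_⟩
      rw [← hχc, ← Polynomial.hom_eval₂, pe, map_zero]
    exact isIntegral_trans _ h1
  have tmul : ∀ f : ↥B,
      χ (IsLocalization.mk' (FractionRing ↥B) f (⟨b, hb⟩ : nonZeroDivisors ↥B)) * b.1 = f.1 := by
    intro f
    have h0 : algebraMap ↥B (FractionRing ↥B) b
        * IsLocalization.mk' (FractionRing ↥B) f (⟨b, hb⟩ : nonZeroDivisors ↥B)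
        = algebraMap ↥B (FractionRing ↥B) f :=
      IsLocalization.mk'_spec'_mk (FractionRing ↥B) f b hb
    have h1 := congrArg χ h0
    rw [RingHom.map_mul] at h1
    have h2 : χ (algebraMap ↥B (FractionRing ↥B) b) = b.1 := IsLocalization.lift_eq hgu b
    have h3 : χ (algebraMap ↥B (FractionRing ↥B) f) = f.1 := IsLocalization.lift_eq hgu f
    rw [h2, h3] at h1
    rw [mul_comm]
    exact h1
  obtain ⟨y, hy, hyJ, hbrep⟩ := nzdB hx hJ hB hA b hb
  obtain ⟨u, huJ, hfrep⟩ := memB_repr hx hJ hB hA f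
  obtain ⟨v, hvJ, hgrep⟩ := memB_repr hx hJ hB hA g
  -- identify χ (f/b) = u/y
  have key : ∀ (f : ↥B) (u : A),
      f.1 = IsLocalization.mk' Q u (⟨x, hx⟩ : nonZeroDivisors A) →
      χ (IsLocalization.mk' (FractionRing ↥B) f (⟨b, hb⟩ : nonZeroDivisors ↥B))
        = IsLocalization.mk' Q u (⟨y, hy⟩ : nonZeroDivisors A) := by
    intro f u hfr
    rw [IsLocalization.eq_mk'_iff_mul_eq]
    have h2 : χ (IsLocalization.mk' (FractionRing ↥B) f (⟨b, hb⟩ : nonZeroDivisors ↥B))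
        * b.1 * alg x = f.1 * alg x := by rw [tmul]
    have hs1 : IsLocalization.mk' Q y (⟨x, hx⟩ : nonZeroDivisors A) * alg x = alg y :=
      IsLocalization.mk'_spec Q y ⟨x, hx⟩
    have hs2 : IsLocalization.mk' Q u (⟨x, hx⟩ : nonZeroDivisors A) * alg x = alg u :=
      IsLocalization.mk'_spec Q u ⟨x, hx⟩
    rw [hbrep, mul_assoc, hs1, hfr, hs2] at h2
    exact h2
  have hfi : IsIntegral A (IsLocalization.mk' Q u (⟨y, hy⟩ : nonZeroDivisors A)) := by
    rw [← key f u hfrep]; exact tIntegral f _ hf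
  have hgi : IsIntegral A (IsLocalization.mk' Q v (⟨y, hy⟩ : nonZeroDivisors A)) := by
    rw [← key g v hgrep]; exact tIntegral g _ hg
  obtain ⟨c, hc⟩ := Ideal.mem_span_singleton'.mp (hA y u v hy hfi hgi)
  -- c / x is integral, hence in B
  have hvx : IsIntegral A (IsLocalization.mk' Q v (⟨x, hx⟩ : nonZeroDivisors A)) :=
    integral_of_mem_closure hx ((memJ_iff hJ).mp hvJ)
  have hci : IsIntegral A (IsLocalization.mk' Q c (⟨x, hx⟩ : nonZeroDivisors A)) := by
    have heq : IsLocalization.mk' Q c (⟨x, hx⟩ : nonZeroDivisors A)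
        = IsLocalization.mk' Q u (⟨y, hy⟩ : nonZeroDivisors A)
          * IsLocalization.mk' Q v (⟨x, hx⟩ : nonZeroDivisors A) := by
      rw [← IsLocalization.mk'_mul]
      symm
      apply IsLocalization.mk'_eq_of_eq
      show (y * x) * c = x * (u * v)
      rw [← hc]; ring
    rw [heq]
    exact hfi.mul hvx
  have hcJ : c ∈ J := (memJ_iff hJ).mpr (mem_closure_of_integral hx hci)
  have hcB : IsLocalization.mk' Q c (⟨x, hx⟩ : nonZeroDivisors A) ∈ B := by
    rw [← SetLike.mem_coe, hB]
    exact mem_set_of_mem hx hJ hA hcJ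
  refine Ideal.mem_span_singleton'.mpr ⟨⟨_, hcB⟩, ?_⟩
  apply Subtype.ext
  show IsLocalization.mk' Q c (⟨x, hx⟩ : nonZeroDivisors A) * b.1 = f.1 * g.1
  rw [hbrep, hfrep, hgrep, ← IsLocalization.mk'_mul, ← IsLocalization.mk'_mul, hc]

end Fwd


section Bwd
variable (A : Type*) [CommRing A]
local notation "Q" => FractionRing A
local notation "alg" => algebraMap A (FractionRing A)

theorem top_closure : ((⊤ : Ideal A) : Set A) = idealIntegralClosure (Ideal.span {1}) := by
  ext a
  simp only [Submodule.top_coe, Set.mem_univ, true_iff]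
  refine ⟨1, one_pos, fun _ => -a, fun i hi => ?_, ?_⟩
  · rw [Ideal.span_singleton_one, Ideal.top_pow]
    trivial
  · simp

theorem top_mem_lambda : (⊤ : Ideal A) ∈ LambdaSet A :=
  ⟨1, one_mem _, top_closure A⟩

theorem bot_eq_set : ((⊥ : Subalgebra A Q) : Set Q) = algebraAtIdealSet A ⊤ := by
  ext q
  simp only [Algebra.coe_bot, Set.mem_range]
  constructor
  · rintro ⟨a, rfl⟩
    refine ⟨0, fun m hm => ?_⟩
    obtain ⟨b, _, hb⟩ := hm
    refine ⟨a * b, ?_, ?_⟩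
    · rw [pow_zero, Ideal.one_eq_top]; trivial
    · simp only [Algebra.linearMap_apply] at hb ⊢
      rw [map_mul, hb]
  · rintro ⟨n, hn⟩
    have h1 : alg 1 ∈ Submodule.map (Algebra.linearMap A Q) ((⊤ : Ideal A) ^ n) := by
      refine Submodule.mem_map_of_mem ?_
      rw [Ideal.top_pow]; trivial
    obtain ⟨a, _, ha⟩ := hn _ h1
    refine ⟨a, ?_⟩
    simp only [Algebra.linearMap_apply, map_one, mul_one] at ha
    exact ha

end Bwd


/-- `A` is weakly Arf iff for every `I ∈ Λ(A)` the ring `A^I = ⋃_{n ≥ 0} (Iⁿ : Iⁿ)`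
is weakly Arf. -/
theorem weaklyArf_iff_algebraAtIdeal_weaklyArf (A : Type*) [CommRing A] :
    IsWeaklyArfRing A ↔
      ∀ I ∈ LambdaSet A, ∀ B : Subalgebra A (FractionRing A),
        (B : Set (FractionRing A)) = algebraAtIdealSet A I → IsWeaklyArfRing B := by
  constructor
  · intro hA I hI B hB
    obtain ⟨x, hx, hJ⟩ := hI
    exact fwd_aux hx hJ hB hA
  · intro h
    have hbot := h ⊤ (top_mem_lambda A) ⊥ (bot_eq_set A)
    exact isWeaklyArfRing_congr
      (Algebra.botEquivOfInjective (IsFractionRing.injective A (FractionRing A))).toRingEquiv hbot
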